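/- Let X := ℝ², Y := ℝ³, A : X → Y with A(x₁, x₂) := (x₁, x₂, 0), c* := (0, 1) ∈ ℝ², P := ℝ × ℝ₊ ⊆ X, Q := {(y₁, y₂, y₃) ∈ Y : y₁ ≥ 0, y₃ ≥ 0, y₂² ≤ 2y₁y₃}, and let v : Y → ℝ ∪ {+∞} be defined by v(y) := inf{⟨x, c*⟩ : x ∈ P, Ax − y ∈ Q} (with inf ∅ := +∞). Then v(y) = y₂ if y ∈ ℝ × ℝ₊ × {0}, v(y) = 0 if y₃ < 0, and v(y) = +∞ otherwise; consequently dom v = (ℝ × ℝ₊ × {0}) ∪ (ℝ × ℝ × (−∞, 0)), and v is not lower semicontinuous at any y = (y₁, y₂, 0) with y₂ > 0. -/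

import Mathlib

namespace Stmt10

/-- The cone `P := ℝ × ℝ₊` in `X := ℝ²`. -/
def P : Set (ℝ × ℝ) := {x | 0 ≤ x.2}

/-- The cone `Q := {(y₁,y₂,y₃) : y₁ ≥ 0, y₃ ≥ 0, y₂² ≤ 2 y₁ y₃}` in `Y := ℝ³`. -/
def Q : Set (ℝ × ℝ × ℝ) := {y | 0 ≤ y.1 ∧ 0 ≤ y.2.2 ∧ y.2.1 ^ 2 ≤ 2 * y.1 * y.2.2}

/-- The linear operator `A(x₁,x₂) := (x₁,x₂,0)`. -/
def A (x : ℝ × ℝ) : ℝ × ℝ × ℝ := (x.1, x.2, 0)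

/-- The cost functional `c* := (0,1)`. -/
def cstar : ℝ × ℝ := (0, 1)

/-- The value function `v(y) := inf {⟨x, c*⟩ : x ∈ P, Ax − y ∈ Q}`. -/
noncomputable def v (y : ℝ × ℝ × ℝ) : EReal :=
  ⨅ (x : ℝ × ℝ) (_ : x ∈ P ∧ A x - y ∈ Q),
    ((x.1 * cstar.1 + x.2 * cstar.2 : ℝ) : EReal)

lemma feas (x : ℝ × ℝ) (y : ℝ × ℝ × ℝ) :
    (x ∈ P ∧ A x - y ∈ Q) ↔
    (0 ≤ x.2 ∧ 0 ≤ x.1 - y.1 ∧ 0 ≤ 0 - y.2.2 ∧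
      (x.2 - y.2.1) ^ 2 ≤ 2 * (x.1 - y.1) * (0 - y.2.2)) := by
  simp [P, Q, A, Prod.sub_def, and_assoc]

lemma v_case1 (y : ℝ × ℝ × ℝ) (h2 : 0 ≤ y.2.1) (h3 : y.2.2 = 0) :
    v y = ((y.2.1 : ℝ) : EReal) := by
  apply le_antisymm
  · apply iInf_le_of_le (y.1, y.2.1)
    refine iInf_le_of_le ?_ ?_
    · rw [feas]; norm_num [h3, h2]
    · norm_num [cstar]
  · refine le_iInf₂ fun x hx => ?_
    rw [feas] at hx
    obtain ⟨hx2, hx1, _, hsq⟩ := hx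
    rw [h3] at hsq
    have : x.2 = y.2.1 := by nlinarith [sq_nonneg (x.2 - y.2.1)]
    simp only [cstar]
    rw [EReal.coe_le_coe_iff]
    nlinarith

lemma v_case2 (y : ℝ × ℝ × ℝ) (h3 : y.2.2 < 0) : v y = 0 := by
  apply le_antisymm
  · apply iInf_le_of_le (y.1 + y.2.1 ^ 2 / (2 * (0 - y.2.2)), 0)
    refine iInf_le_of_le ?_ ?_
    · rw [feas]
      dsimp only
      have hpos : (0:ℝ) < 0 - y.2.2 := by linarith
      have hdiv : 0 ≤ y.2.1 ^ 2 / (2 * (0 - y.2.2)) :=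
        div_nonneg (sq_nonneg _) (by linarith)
      have ht : 2 * (y.1 + y.2.1 ^ 2 / (2 * (0 - y.2.2)) - y.1) * (0 - y.2.2)
          = y.2.1 ^ 2 := by
        field_simp
        ring
      refine ⟨le_refl 0, by linarith, by linarith, ?_⟩
      have heq : ((0:ℝ) - y.2.1) ^ 2 = y.2.1 ^ 2 := by ring
      rw [heq, ht]
    · norm_num [cstar]
  · refine le_iInf₂ fun x hx => ?_
    rw [feas] at hx
    simp only [cstar]
    have : (0:ℝ) ≤ x.1 * 0 + x.2 * 1 := by nlinarith [hx.1]
    exact_mod_cast this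

lemma v_case3 (y : ℝ × ℝ × ℝ) (h : ¬ (0 ≤ y.2.1 ∧ y.2.2 = 0)) (h3 : ¬ (y.2.2 < 0)) :
    v y = ⊤ := by
  rw [v, iInf_eq_top]
  intro x
  rw [iInf_eq_top]
  intro hx
  exfalso
  rw [feas] at hx
  obtain ⟨hx2, hx1, hy3, hsq⟩ := hx
  have hy3' : y.2.2 = 0 := le_antisymm (by linarith) (not_lt.mp h3)
  rw [hy3'] at hsq
  have hxeq : x.2 = y.2.1 := by nlinarith [sq_nonneg (x.2 - y.2.1)]
  exact h ⟨hxeq ▸ hx2, hy3'⟩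

theorem stmt10 :
    (∀ y : ℝ × ℝ × ℝ, 0 ≤ y.2.1 → y.2.2 = 0 → v y = ((y.2.1 : ℝ) : EReal)) ∧
    (∀ y : ℝ × ℝ × ℝ, y.2.2 < 0 → v y = 0) ∧
    (∀ y : ℝ × ℝ × ℝ, ¬ (0 ≤ y.2.1 ∧ y.2.2 = 0) → ¬ (y.2.2 < 0) → v y = ⊤) ∧
    ({y : ℝ × ℝ × ℝ | v y < ⊤} =
      {y : ℝ × ℝ × ℝ | (0 ≤ y.2.1 ∧ y.2.2 = 0) ∨ y.2.2 < 0}) ∧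
    (∀ y : ℝ × ℝ × ℝ, 0 < y.2.1 → y.2.2 = 0 → ¬ LowerSemicontinuousAt v y) := by
  refine ⟨v_case1, v_case2, v_case3, ?_, ?_⟩
  · ext y
    simp only [Set.mem_setOf_eq]
    constructor
    · intro hlt
      by_contra hc
      obtain ⟨hc1, hc2⟩ := not_or.mp hc
      rw [v_case3 y hc1 hc2] at hlt
      exact lt_irrefl _ hlt
    · rintro (⟨h2, h3⟩ | h3)
      · rw [v_case1 y h2 h3]; exact lt_top_iff_ne_top.mpr (EReal.coe_ne_top _)
      · rw [v_case2 y h3]; exact lt_top_iff_ne_top.mpr (by simp)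
  · intro y hy2 hy3 h
    have h0 : (0:EReal) < v y := by
      rw [v_case1 y hy2.le hy3]; exact_mod_cast hy2
    have hev := h 0 h0
    set f : ℕ → ℝ × ℝ × ℝ := fun n => (y.1, y.2.1, -(1 / (n + 1))) with hf
    have htend : Filter.Tendsto f Filter.atTop (nhds y) := by
      have h3 : Filter.Tendsto (fun n : ℕ => (-(1 / (n + 1)) : ℝ)) Filter.atTop (nhds 0) := by
        simpa using (tendsto_one_div_add_atTop_nhds_zero_nat (𝕜 := ℝ)).neg
      have : Filter.Tendsto f Filter.atTop (nhds (y.1, y.2.1, 0)) :=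
        (tendsto_const_nhds).prodMk_nhds ((tendsto_const_nhds).prodMk_nhds h3)
      have hy : y = (y.1, y.2.1, (0:ℝ)) := by
        ext <;> simp [hy3]
      rwa [← hy] at this
    have := (htend.eventually hev).exists
    obtain ⟨n, hn⟩ := this
    have : v (f n) = 0 := by
      apply v_case2
      have : (0:ℝ) < 1 / (n + 1) := by positivity
      simp only [hf]
      linarith
    rw [this] at hn
    exact lt_irrefl _ hn

end Stmt10
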